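/- Let T be a tournament, and suppose U ⊆ V(T) is a set of minimum size such that T − U is disconnected into a source part S and a nonempty sink part T' (every edge between S and T' goes from S to T'), subject to the conditions |S| ≥ |U| and |T'| ≥ k. Then for every nonempty subset X ⊆ U, we have |N⁺(X) ∩ S| ≥ |X|/2. -/
import Mathlib


open Finset

/-- Expansion from a minimum cut: if `U` is a minimum-size set disconnecting a
tournament into a source part `S` and sink part `T'` (with `|S| ≥ |U|` and
`|T'| ≥ k`), then every nonempty `X ⊆ U` satisfies `|N⁺(X) ∩ S| ≥ |X|/2`. -/
theorem stmt_15 {V : Type*} [Fintype V] [DecidableEq V]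
    (r : V → V → Prop) [DecidableRel r]
    (hirr : ∀ v, ¬ r v v)
    (htour : ∀ u v : V, u ≠ v → (r u v ↔ ¬ r v u))
    (k : ℕ) (U S T' : Finset V)
    (hpart : U ∪ S ∪ T' = Finset.univ)
    (hUS : Disjoint U S) (hUT : Disjoint U T') (hST : Disjoint S T')
    (hSne : S.Nonempty) (hTne : T'.Nonempty)
    (hdir : ∀ s ∈ S, ∀ t ∈ T', r s t)
    (hsize : U.card ≤ S.card) (hk : k ≤ T'.card)
    (hmin : ∀ U' S' T'' : Finset V,
      U' ∪ S' ∪ T'' = Finset.univ →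
      Disjoint U' S' → Disjoint U' T'' → Disjoint S' T'' →
      S'.Nonempty → T''.Nonempty →
      (∀ s ∈ S', ∀ t ∈ T'', r s t) →
      U'.card ≤ S'.card → k ≤ T''.card →
      U.card ≤ U'.card) :
    ∀ X ⊆ U, X.Nonempty →
      X.card ≤ 2 * ((Finset.univ.filter (fun v => ∃ x ∈ X, r x v)) ∩ S).card := by
  intro X hXU hXne
  by_contra hcon
  push_neg at hcon
  set Y := (Finset.univ.filter (fun v => ∃ x ∈ X, r x v)) ∩ S with hY
  have hYS : Y ⊆ S := inter_subset_right
  have hXcard : X.card ≤ U.card := card_le_card hXU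
  have hYScard : Y.card ≤ S.card := card_le_card hYS
  set U' := (U \ X) ∪ Y with hU'
  set S' := S \ Y with hS'
  set T'' := T' ∪ X with hT''
  have hUSl := Finset.disjoint_left.mp hUS
  have hUTl := Finset.disjoint_left.mp hUT
  have hSTl := Finset.disjoint_left.mp hST
  have hdUY : Disjoint (U \ X) Y := (hUS.mono sdiff_subset hYS)
  have hU'card : U'.card = (U.card - X.card) + Y.card := by
    rw [hU', card_union_of_disjoint hdUY, card_sdiff_of_subset hXU]
  have hS'card : S'.card = S.card - Y.card := card_sdiff_of_subset hYS
  have hT''card : T''.card = T'.card + X.card := by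
    rw [hT'', card_union_of_disjoint (hUT.symm.mono_right hXU)]
  -- partition
  have hpart' : U' ∪ S' ∪ T'' = Finset.univ := by
    ext v
    have hv : v ∈ U ∪ S ∪ T' := hpart ▸ mem_univ v
    simp only [mem_union] at hv
    simp only [hU', hS', hT'', mem_union, mem_sdiff, mem_univ, iff_true]
    by_cases hvX : v ∈ X <;> by_cases hvY : v ∈ Y <;> tauto
  have hd1 : Disjoint U' S' := by
    rw [Finset.disjoint_left]
    intro a ha hb
    simp only [hU', hS', mem_union, mem_sdiff] at ha hb
    rcases ha with ⟨haU, _⟩ | haY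
    · exact hUSl haU hb.1
    · exact hb.2 haY
  have hd2 : Disjoint U' T'' := by
    rw [Finset.disjoint_left]
    intro a ha hb
    simp only [hU', hT'', mem_union, mem_sdiff] at ha hb
    rcases ha with ⟨haU, haX⟩ | haY
    · rcases hb with hbT | hbX
      · exact hUTl haU hbT
      · exact haX hbX
    · have haS := hYS haY
      rcases hb with hbT | hbX
      · exact hSTl haS hbT
      · exact hUSl (hXU hbX) haS
  have hd3 : Disjoint S' T'' := by
    rw [Finset.disjoint_left]
    intro a ha hb
    simp only [hS', hT'', mem_union, mem_sdiff] at ha hb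
    rcases hb with hbT | hbX
    · exact hSTl ha.1 hbT
    · exact hUSl (hXU hbX) ha.1
  have hS'ne : S'.Nonempty := by
    rw [← card_pos, hS'card]
    omega
  have hT''ne : T''.Nonempty := hTne.mono (hT'' ▸ subset_union_left)
  have hdir' : ∀ s ∈ S', ∀ t ∈ T'', r s t := by
    intro s hs t ht
    rw [hS', mem_sdiff] at hs
    obtain ⟨hsS, hsnY⟩ := hs
    rw [hT'', mem_union] at ht
    rcases ht with htT | htX
    · exact hdir s hsS t htT
    · have hnrs : ¬ r t s := by
        intro hrt
        exact hsnY (by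
          rw [hY]
          exact mem_inter_of_mem (mem_filter.mpr ⟨mem_univ s, ⟨t, htX, hrt⟩⟩) hsS)
      have hne : s ≠ t := by
        intro h
        exact hUSl (hXU htX) (h ▸ hsS)
      exact (htour s t hne).mpr hnrs
  have hsz : U'.card ≤ S'.card := by
    rw [hU'card, hS'card]
    omega
  have hk' : k ≤ T''.card := by
    rw [hT''card]; omega
  have := hmin U' S' T'' hpart' hd1 hd2 hd3 hS'ne hT''ne hdir' hsz hk'
  omega
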